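/- If ρ is a partial factor set of G over κ, then the map ρ* defined by ρ*(g,h) = ρ(h⁻¹,g⁻¹) is also a partial factor set of G, and there exists a surjective κ-algebra homomorphism κ_par^{ρ*}G → (κ_par^ρ G)^{op} sending [g]^{ρ*} to [g⁻¹]^ρ. -/
import Mathlib


/-- A partial projective representation of a group `G` in a unital `κ`-algebra,
together with a factor set `σ` for it. -/
structure PartialProjectiveRep (κ : Type) (G : Type) [Field κ] [Group G] where
  carrier : Type
  [ringCarrier : Ring carrier]
  [algCarrier : Algebra κ carrier]
  Γ : G → carrier
  σ : G → G → κ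
  cond1 : ∀ g h : G, σ g h = 0 → Γ g⁻¹ * Γ (g * h) = 0 ∧ Γ (g * h) * Γ h⁻¹ = 0
  cond2 : ∀ g h : G, Γ g⁻¹ * Γ g * Γ h = σ g h • (Γ g⁻¹ * Γ (g * h))
  cond3 : ∀ g h : G, Γ g * Γ h * Γ h⁻¹ = σ g h • (Γ (g * h) * Γ h⁻¹)
  cond4 : Γ 1 = 1
  factor : ∀ g h : G, Γ g * Γ h = 0 → σ g h = 0

/-- `ρ ∈ pm(G)`. -/
def IsPartialFactorSet (κ : Type) (G : Type) [Field κ] [Group G] (ρ : G → G → κ) : Prop :=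
  ∃ P : PartialProjectiveRep κ G, P.σ = ρ

/-- The defining relations of the twisted partial group algebra `κ_par^σ G`. -/
inductive TPGARel (κ : Type) (G : Type) [Field κ] [Group G] (σ : G → G → κ) :
    FreeAlgebra κ G → FreeAlgebra κ G → Prop
  | zero_left {g h : G} : σ g h = 0 →
      TPGARel κ G σ (FreeAlgebra.ι κ g⁻¹ * FreeAlgebra.ι κ (g * h)) 0
  | zero_right {g h : G} : σ g h = 0 →
      TPGARel κ G σ (FreeAlgebra.ι κ (g * h) * FreeAlgebra.ι κ h⁻¹) 0
  | left (g h : G) :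
      TPGARel κ G σ (FreeAlgebra.ι κ g⁻¹ * FreeAlgebra.ι κ g * FreeAlgebra.ι κ h)
        (σ g h • (FreeAlgebra.ι κ g⁻¹ * FreeAlgebra.ι κ (g * h)))
  | right (g h : G) :
      TPGARel κ G σ (FreeAlgebra.ι κ g * FreeAlgebra.ι κ h * FreeAlgebra.ι κ h⁻¹)
        (σ g h • (FreeAlgebra.ι κ (g * h) * FreeAlgebra.ι κ h⁻¹))
  | mul_one (g : G) :
      TPGARel κ G σ (FreeAlgebra.ι κ g * FreeAlgebra.ι κ 1) (FreeAlgebra.ι κ g)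
  | one_mul (g : G) :
      TPGARel κ G σ (FreeAlgebra.ι κ 1 * FreeAlgebra.ι κ g) (FreeAlgebra.ι κ g)

/-- The twisted partial group algebra `κ_par^σ G`. -/
abbrev TwistedPartialGroupAlgebra (κ : Type) (G : Type) [Field κ] [Group G]
    (σ : G → G → κ) : Type :=
  RingQuot (TPGARel κ G σ)

/-- The canonical generator `[g]^σ` of `κ_par^σ G`. -/
def tpgaGen (κ : Type) (G : Type) [Field κ] [Group G] (σ : G → G → κ) (g : G) :
    TwistedPartialGroupAlgebra κ G σ :=
  RingQuot.mkAlgHom κ (TPGARel κ G σ) (FreeAlgebra.ι κ g)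

section Aux

variable {κ G : Type} [Field κ] [Group G] (σ : G → G → κ)

lemma tpga_zero_left {g h : G} (h0 : σ g h = 0) :
    tpgaGen κ G σ g⁻¹ * tpgaGen κ G σ (g * h) = 0 := by
  have := RingQuot.mkAlgHom_rel κ (TPGARel.zero_left (κ := κ) (G := G) (σ := σ) h0)
  simpa [tpgaGen, map_mul] using this

lemma tpga_zero_right {g h : G} (h0 : σ g h = 0) :
    tpgaGen κ G σ (g * h) * tpgaGen κ G σ h⁻¹ = 0 := by
  have := RingQuot.mkAlgHom_rel κ (TPGARel.zero_right (κ := κ) (G := G) (σ := σ) h0)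
  simpa [tpgaGen, map_mul] using this

lemma tpga_left (g h : G) :
    tpgaGen κ G σ g⁻¹ * tpgaGen κ G σ g * tpgaGen κ G σ h =
      σ g h • (tpgaGen κ G σ g⁻¹ * tpgaGen κ G σ (g * h)) := by
  have := RingQuot.mkAlgHom_rel κ (TPGARel.left (κ := κ) (G := G) (σ := σ) g h)
  simpa [tpgaGen, map_mul, map_smul] using this

lemma tpga_right (g h : G) :
    tpgaGen κ G σ g * tpgaGen κ G σ h * tpgaGen κ G σ h⁻¹ =
      σ g h • (tpgaGen κ G σ (g * h) * tpgaGen κ G σ h⁻¹) := by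
  have := RingQuot.mkAlgHom_rel κ (TPGARel.right (κ := κ) (G := G) (σ := σ) g h)
  simpa [tpgaGen, map_mul, map_smul] using this

lemma tpga_mul_one (g : G) :
    tpgaGen κ G σ g * tpgaGen κ G σ 1 = tpgaGen κ G σ g := by
  have := RingQuot.mkAlgHom_rel κ (TPGARel.mul_one (κ := κ) (G := G) (σ := σ) g)
  simpa [tpgaGen, map_mul] using this

lemma tpga_one_mul (g : G) :
    tpgaGen κ G σ 1 * tpgaGen κ G σ g = tpgaGen κ G σ g := by
  have := RingQuot.mkAlgHom_rel κ (TPGARel.one_mul (κ := κ) (G := G) (σ := σ) g)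
  simpa [tpgaGen, map_mul] using this

end Aux

/-- If `ρ` is a partial factor set of `G` over `κ`, then
`ρ*(g,h) = ρ(h⁻¹,g⁻¹)` is also a partial factor set of `G`, and there exists a surjective
`κ`-algebra homomorphism `κ_par^{ρ*}G → (κ_par^ρ G)ᵒᵖ` sending `[g]^{ρ*}` to `[g⁻¹]^ρ`. -/
theorem partialFactorSet_involution
    {κ G : Type} [Field κ] [Group G] (ρ : G → G → κ)
    (hpm : IsPartialFactorSet κ G ρ) :
    IsPartialFactorSet κ G (fun g h => ρ h⁻¹ g⁻¹) ∧
    ∃ f : TwistedPartialGroupAlgebra κ G (fun g h => ρ h⁻¹ g⁻¹) →ₐ[κ]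
        (TwistedPartialGroupAlgebra κ G ρ)ᵐᵒᵖ,
      Function.Surjective f ∧
      ∀ g : G, f (tpgaGen κ G (fun g h => ρ h⁻¹ g⁻¹) g) =
        MulOpposite.op (tpgaGen κ G ρ g⁻¹) := by
  constructor
  · -- ρ* is a partial factor set
    obtain ⟨P, hP⟩ := hpm
    subst hP
    letI : Ring P.carrier := P.ringCarrier
    letI : Algebra κ P.carrier := P.algCarrier
    refine ⟨{
      carrier := P.carrierᵐᵒᵖ
      Γ := fun g => MulOpposite.op (P.Γ g⁻¹)
      σ := fun g h => P.σ h⁻¹ g⁻¹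
      cond1 := ?_
      cond2 := ?_
      cond3 := ?_
      cond4 := ?_
      factor := ?_ }, rfl⟩
    · intro g h h0
      obtain ⟨h1, h2⟩ := P.cond1 h⁻¹ g⁻¹ h0
      simp only [inv_inv] at h1 h2
      constructor
      · simp only [inv_inv, mul_inv_rev]
        rw [← MulOpposite.op_mul, h2, MulOpposite.op_zero]
      · simp only [inv_inv, mul_inv_rev]
        rw [← MulOpposite.op_mul, h1, MulOpposite.op_zero]
    · intro g h
      have := P.cond3 h⁻¹ g⁻¹
      simp only [inv_inv] at this
      simp only [inv_inv, mul_inv_rev, ← MulOpposite.op_mul, ← MulOpposite.op_smul]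
      rw [← mul_assoc, this]
    · intro g h
      have := P.cond2 h⁻¹ g⁻¹
      simp only [inv_inv] at this
      simp only [inv_inv, mul_inv_rev, ← MulOpposite.op_mul, ← MulOpposite.op_smul]
      rw [← mul_assoc, this]
    · simp [P.cond4]
    · intro g h hgh
      apply P.factor
      simpa [← MulOpposite.op_mul] using hgh
  · -- the algebra homomorphism
    set F := tpgaGen κ G ρ with hF
    have key : ∀ x y, TPGARel κ G (fun g h => ρ h⁻¹ g⁻¹) x y →
        (FreeAlgebra.lift κ (fun g => MulOpposite.op (F g⁻¹))) x =
        (FreeAlgebra.lift κ (fun g => MulOpposite.op (F g⁻¹))) y := by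
      intro x y hxy
      induction hxy with
      | @zero_left g h h0 =>
          simp only [map_mul, FreeAlgebra.lift_ι_apply, map_zero, inv_inv, mul_inv_rev,
            ← MulOpposite.op_mul]
          have : F (h⁻¹ * g⁻¹) * F g⁻¹⁻¹ = 0 := tpga_zero_right ρ h0
          simp only [inv_inv] at this
          rw [this, MulOpposite.op_zero]
      | @zero_right g h h0 =>
          simp only [map_mul, FreeAlgebra.lift_ι_apply, map_zero, inv_inv, mul_inv_rev,
            ← MulOpposite.op_mul]
          have : F h⁻¹⁻¹ * F (h⁻¹ * g⁻¹) = 0 := tpga_zero_left ρ h0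
          simp only [inv_inv] at this
          rw [this, MulOpposite.op_zero]
      | left g h =>
          simp only [map_mul, map_smul, FreeAlgebra.lift_ι_apply, inv_inv, mul_inv_rev,
            ← MulOpposite.op_mul, ← MulOpposite.op_smul]
          have := tpga_right ρ h⁻¹ g⁻¹
          simp only [inv_inv] at this
          rw [← mul_assoc, this]
      | right g h =>
          simp only [map_mul, map_smul, FreeAlgebra.lift_ι_apply, inv_inv, mul_inv_rev,
            ← MulOpposite.op_mul, ← MulOpposite.op_smul]
          have := tpga_left ρ h⁻¹ g⁻¹
          simp only [inv_inv] at this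
          rw [← mul_assoc, this]
      | mul_one g =>
          simp only [map_mul, FreeAlgebra.lift_ι_apply, inv_one, ← MulOpposite.op_mul]
          rw [tpga_one_mul]
      | one_mul g =>
          simp only [map_mul, FreeAlgebra.lift_ι_apply, inv_one, ← MulOpposite.op_mul]
          rw [tpga_mul_one]
    refine ⟨RingQuot.liftAlgHom κ ⟨FreeAlgebra.lift κ (fun g => MulOpposite.op (F g⁻¹)), key⟩,
      ?_, ?_⟩
    · -- surjectivity
      intro x
      induction x using MulOpposite.rec' with
      | h x =>
        obtain ⟨y, rfl⟩ := RingQuot.mkAlgHom_surjective κ (TPGARel κ G ρ) x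
        induction y using FreeAlgebra.induction with
        | grade0 r =>
            exact ⟨algebraMap κ _ r, by simp [map_zero]⟩
        | grade1 g =>
            refine ⟨tpgaGen κ G (fun g h => ρ h⁻¹ g⁻¹) g⁻¹, ?_⟩
            rw [tpgaGen, RingQuot.liftAlgHom_mkAlgHom_apply]
            simp [hF, tpgaGen]
        | mul a b iha ihb =>
            obtain ⟨u, hu⟩ := iha
            obtain ⟨v, hv⟩ := ihb
            exact ⟨v * u, by simp [map_mul, hu, hv, MulOpposite.op_mul]⟩
        | add a b iha ihb =>
            obtain ⟨u, hu⟩ := iha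
            obtain ⟨v, hv⟩ := ihb
            exact ⟨u + v, by simp [map_add, hu, hv]⟩
    · intro g
      rw [tpgaGen, RingQuot.liftAlgHom_mkAlgHom_apply]
      simp [hF]
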